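/- Lower bound on collision relative entropy via information spectrum: for every 0 < ε, λ < 1 and density matrices ρ, σ, exp D₂(ρ ‖ λρ + (1−λ)σ) ≥ (1−ε) · [λ + (1−λ) · exp(−D_s^ε(ρ‖σ))]^{−1}. -/

import Mathlib

open Matrix BigOperators ComplexOrder Kronecker

variable {n : Type*} [Fintype n] [DecidableEq n]

/-- Apply a real function to a matrix via its spectral decomposition (0 if not Hermitian). -/
noncomputable def mFun (f : ℝ → ℝ) (A : Matrix n n ℂ) : Matrix n n ℂ :=
  if hA : A.IsHermitian then
    (hA.eigenvectorUnitary : Matrix n n ℂ) *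
      Matrix.diagonal (fun i => (f (hA.eigenvalues i) : ℂ)) *
      star (hA.eigenvectorUnitary : Matrix n n ℂ)
  else 0

/-- Fractional power of the Moore–Penrose pseudoinverse type: `x ↦ x^r` on the support. -/
noncomputable def mpow (r : ℝ) (A : Matrix n n ℂ) : Matrix n n ℂ :=
  mFun (fun x => if x = 0 then 0 else x ^ r) A

/-- Projection onto nonnegative eigenspaces of a Hermitian matrix. -/
noncomputable def projNonneg (A : Matrix n n ℂ) : Matrix n n ℂ :=
  mFun (fun x => if 0 ≤ x then 1 else 0) A

/-- Projection onto strictly positive eigenspaces of a Hermitian matrix. -/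
noncomputable def projPos (A : Matrix n n ℂ) : Matrix n n ℂ :=
  mFun (fun x => if 0 < x then 1 else 0) A

/-- supp ρ ⊆ supp σ, phrased via kernels (for PSD matrices). -/
def suppLE (ρ σ : Matrix n n ℂ) : Prop :=
  ∀ v : n → ℂ, σ.mulVec v = 0 → ρ.mulVec v = 0

/-- Exponential of the collision relative entropy, exp D₂(ρ‖σ) = tr[(σ^{-1/4} ρ σ^{-1/4})²]. -/
noncomputable def expD2 (ρ σ : Matrix n n ℂ) : ℝ :=
  (((mpow (-(4:ℝ)⁻¹) σ) * ρ * (mpow (-(4:ℝ)⁻¹) σ)) ^ 2).trace.re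

/-- Collision relative entropy (base 2). -/
noncomputable def D2 (ρ σ : Matrix n n ℂ) : ℝ := Real.logb 2 (expD2 ρ σ)

/-- Information spectrum relative entropy. -/
noncomputable def Ds (ε : ℝ) (ρ σ : Matrix n n ℂ) : ℝ :=
  sSup {R : ℝ | Complex.re (Matrix.trace (ρ * projNonneg ((2:ℝ)^R • σ - ρ))) ≤ ε}

/-- Density matrix. -/
def IsDensity (ρ : Matrix n n ℂ) : Prop := ρ.PosSemidef ∧ ρ.trace = 1

lemma mFun_eq (f : ℝ → ℝ) {A : Matrix n n ℂ} (hA : A.IsHermitian) :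
    mFun f A = (hA.eigenvectorUnitary : Matrix n n ℂ) *
      Matrix.diagonal (fun i => (f (hA.eigenvalues i) : ℂ)) *
      star (hA.eigenvectorUnitary : Matrix n n ℂ) := dif_pos hA

lemma mFun_mul (f g : ℝ → ℝ) {A : Matrix n n ℂ} (hA : A.IsHermitian) :
    mFun f A * mFun g A = mFun (fun x => f x * g x) A := by
  rw [mFun_eq f hA, mFun_eq g hA, mFun_eq _ hA]
  set U := (hA.eigenvectorUnitary : Matrix n n ℂ)
  have h1 : star U * U = 1 := Unitary.coe_star_mul_self hA.eigenvectorUnitary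
  calc U * Matrix.diagonal (fun i => (f (hA.eigenvalues i) : ℂ)) * star U *
        (U * Matrix.diagonal (fun i => (g (hA.eigenvalues i) : ℂ)) * star U)
      = U * (Matrix.diagonal (fun i => (f (hA.eigenvalues i) : ℂ)) * (star U * U) *
          Matrix.diagonal (fun i => (g (hA.eigenvalues i) : ℂ))) * star U := by
        simp only [Matrix.mul_assoc]
    _ = U * Matrix.diagonal (fun i => ((f (hA.eigenvalues i) * g (hA.eigenvalues i) : ℝ) : ℂ)) * star U := by
        rw [h1, Matrix.mul_one, Matrix.diagonal_mul_diagonal]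
        push_cast
        ring_nf

lemma mFun_add (f g : ℝ → ℝ) {A : Matrix n n ℂ} (hA : A.IsHermitian) :
    mFun f A + mFun g A = mFun (fun x => f x + g x) A := by
  rw [mFun_eq f hA, mFun_eq g hA, mFun_eq _ hA]
  rw [← Matrix.add_mul, ← Matrix.mul_add, Matrix.diagonal_add]
  push_cast
  ring_nf

lemma mFun_congr {f g : ℝ → ℝ} {A : Matrix n n ℂ} (hA : A.IsHermitian)
    (h : ∀ i, f (hA.eigenvalues i) = g (hA.eigenvalues i)) : mFun f A = mFun g A := by
  rw [mFun_eq f hA, mFun_eq g hA]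
  have : (fun i => (f (hA.eigenvalues i) : ℂ)) = fun i => (g (hA.eigenvalues i) : ℂ) :=
    funext fun i => by rw [h i]
  rw [this]

lemma mFun_one {A : Matrix n n ℂ} (hA : A.IsHermitian) : mFun (fun _ => 1) A = 1 := by
  rw [mFun_eq _ hA]
  have h2 : (hA.eigenvectorUnitary : Matrix n n ℂ) * star (hA.eigenvectorUnitary : Matrix n n ℂ) = 1 :=
    Unitary.coe_mul_star_self hA.eigenvectorUnitary
  simp [Matrix.diagonal_one, h2]

lemma mFun_zero {A : Matrix n n ℂ} (hA : A.IsHermitian) : mFun (fun _ => 0) A = 0 := by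
  rw [mFun_eq _ hA]
  simp

lemma mFun_id {A : Matrix n n ℂ} (hA : A.IsHermitian) : mFun (fun x => x) A = A := by
  rw [mFun_eq _ hA]
  exact hA.spectral_theorem.symm

lemma trace_mFun (f : ℝ → ℝ) {A : Matrix n n ℂ} (hA : A.IsHermitian) :
    (mFun f A).trace = ((∑ i, f (hA.eigenvalues i) : ℝ) : ℂ) := by
  rw [mFun_eq f hA, Matrix.trace_mul_cycle]
  rw [Unitary.coe_star_mul_self hA.eigenvectorUnitary, Matrix.one_mul, Matrix.trace_diagonal]
  push_cast
  rfl

lemma mFun_isHermitian (f : ℝ → ℝ) {A : Matrix n n ℂ} (hA : A.IsHermitian) :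
    (mFun f A).IsHermitian := by
  rw [mFun_eq f hA]
  unfold Matrix.IsHermitian
  simp only [Matrix.conjTranspose_mul, Matrix.star_eq_conjTranspose, Matrix.conjTranspose_conjTranspose,
    Matrix.diagonal_conjTranspose]
  have : star (fun i => (f (hA.eigenvalues i) : ℂ)) = fun i => (f (hA.eigenvalues i) : ℂ) := by
    funext i; simp [Pi.star_apply, Complex.star_def, Complex.conj_ofReal]
  rw [this, Matrix.mul_assoc]

lemma mFun_posSemidef {f : ℝ → ℝ} (hf : ∀ x, 0 ≤ f x) {A : Matrix n n ℂ} (hA : A.IsHermitian) :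
    (mFun f A).PosSemidef := by
  rw [mFun_eq f hA]
  have hd : (Matrix.diagonal (fun i => (f (hA.eigenvalues i) : ℂ))).PosSemidef := by
    rw [Matrix.posSemidef_diagonal_iff]
    intro i
    rw [Complex.zero_le_real]
    exact hf _
  have := hd.mul_mul_conjTranspose_same (hA.eigenvectorUnitary : Matrix n n ℂ)
  rwa [Matrix.star_eq_conjTranspose]

lemma trace_mFun_re (f : ℝ → ℝ) {A : Matrix n n ℂ} (hA : A.IsHermitian) :
    (mFun f A).trace.re = ∑ i, f (hA.eigenvalues i) := by
  rw [trace_mFun f hA, Complex.ofReal_re]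

/-- trace of A * mFun f A. -/
lemma trace_mul_mFun_re (f : ℝ → ℝ) {A : Matrix n n ℂ} (hA : A.IsHermitian) :
    (A * mFun f A).trace.re = ∑ i, hA.eigenvalues i * f (hA.eigenvalues i) := by
  nth_rewrite 1 [← mFun_id hA]
  rw [mFun_mul _ _ hA, trace_mFun_re _ hA]

lemma psd_trace_re_nonneg {A : Matrix n n ℂ} (hA : A.PosSemidef) : 0 ≤ A.trace.re := by
  have : A.trace = ((∑ i, hA.1.eigenvalues i : ℝ) : ℂ) := by
    conv_lhs => rw [← mFun_id hA.1]
    exact trace_mFun _ hA.1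
  rw [this, Complex.ofReal_re]
  exact Finset.sum_nonneg fun i _ => hA.eigenvalues_nonneg i

lemma trace_mul_psd_re_nonneg {A B : Matrix n n ℂ} (hA : A.PosSemidef) (hB : B.PosSemidef) :
    0 ≤ (A * B).trace.re := by
  obtain ⟨C, rfl⟩ : ∃ C : Matrix n n ℂ, B = Cᴴ * C := by
    refine ⟨mFun Real.sqrt B, ?_⟩
    rw [(mFun_isHermitian _ hB.1).eq, mFun_mul _ _ hB.1]
    conv_lhs => rw [← mFun_id hB.1]
    exact mFun_congr hB.1 fun i => (Real.mul_self_sqrt (hB.eigenvalues_nonneg i)).symm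
  have h : (A * (Cᴴ * C)).trace = (C * A * Cᴴ).trace := by
    rw [← Matrix.mul_assoc, Matrix.trace_mul_cycle]
  rw [h]
  exact psd_trace_re_nonneg (hA.mul_mul_conjTranspose_same C)

/-- Cauchy-Schwarz for the Frobenius inner product. -/
lemma trace_cauchy_schwarz (X Y : Matrix n n ℂ) :
    ‖(Xᴴ * Y).trace‖ ^ 2 ≤ (Xᴴ * X).trace.re * (Yᴴ * Y).trace.re := by
  let x : EuclideanSpace ℂ (n × n) := WithLp.toLp 2 (fun p : n × n => X p.1 p.2)
  let y : EuclideanSpace ℂ (n × n) := WithLp.toLp 2 (fun p : n × n => Y p.1 p.2)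
  have htr : ∀ (U V : Matrix n n ℂ), (Uᴴ * V).trace =
      ∑ p : n × n, (starRingEnd ℂ) (U p.1 p.2) * V p.1 p.2 := by
    intro U V
    rw [Matrix.trace, Fintype.sum_prod_type]
    simp only [Matrix.diag_apply, Matrix.mul_apply, Matrix.conjTranspose_apply]
    rw [Finset.sum_comm]
    simp [Complex.star_def]
  have hxy : (Xᴴ * Y).trace = (inner ℂ x y : ℂ) := by
    rw [htr, PiLp.inner_apply]; simp only [x, y, WithLp.ofLp_toLp, RCLike.inner_apply, mul_comm]
  have hxx : (Xᴴ * X).trace = (inner ℂ x x : ℂ) := by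
    rw [htr, PiLp.inner_apply]; simp only [x, y, WithLp.ofLp_toLp, RCLike.inner_apply, mul_comm]
  have hyy : (Yᴴ * Y).trace = (inner ℂ y y : ℂ) := by
    rw [htr, PiLp.inner_apply]; simp only [x, y, WithLp.ofLp_toLp, RCLike.inner_apply, mul_comm]
  have hcs := norm_inner_le_norm (𝕜 := ℂ) x y
  have h1 : ‖(Xᴴ * Y).trace‖ ≤ ‖x‖ * ‖y‖ := by
    rw [hxy]
    exact hcs
  have h2 : (Xᴴ * X).trace.re = ‖x‖ ^ 2 := by
    rw [hxx, inner_self_eq_norm_sq_to_K (𝕜 := ℂ) x]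
    norm_cast
  have h3 : (Yᴴ * Y).trace.re = ‖y‖ ^ 2 := by
    rw [hyy, inner_self_eq_norm_sq_to_K (𝕜 := ℂ) y]
    norm_cast
  rw [h2, h3]
  calc ‖(Xᴴ * Y).trace‖ ^ 2 ≤ (‖x‖ * ‖y‖) ^ 2 := by
        apply pow_le_pow_left₀ (norm_nonneg _) h1
    _ = ‖x‖ ^ 2 * ‖y‖ ^ 2 := by ring

/-- the support projection of τ -/
lemma supp_add_ker {τ : Matrix n n ℂ} (hτ : τ.IsHermitian) :
    mFun (fun x => if x = 0 then 0 else 1) τ + mFun (fun x => if x = 0 then 1 else 0) τ = 1 := by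
  rw [mFun_add _ _ hτ]
  have : (fun x : ℝ => (if x = 0 then 0 else 1) + (if x = 0 then 1 else 0)) = fun _ => (1:ℝ) := by
    funext x; by_cases h : x = 0 <;> simp [h]
  rw [this, mFun_one hτ]

lemma mul_ker_eq_zero {τ : Matrix n n ℂ} (hτ : τ.IsHermitian) :
    τ * mFun (fun x => if x = 0 then 1 else 0) τ = 0 := by
  nth_rewrite 1 [← mFun_id hτ]
  rw [mFun_mul _ _ hτ]
  have : (fun x : ℝ => x * (if x = 0 then 1 else 0)) = fun _ => (0:ℝ) := by
    funext x; by_cases h : x = 0 <;> simp [h]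
  rw [this, mFun_zero hτ]

lemma mul_supp_eq_self {ρ τ : Matrix n n ℂ} (hρ : ρ.IsHermitian) (hτ : τ.IsHermitian)
    (hsupp : suppLE ρ τ) :
    ρ * mFun (fun x => if x = 0 then 0 else 1) τ = ρ := by
  set Q := mFun (fun x : ℝ => if x = 0 then 1 else 0) τ with hQdef
  have hρQ : ρ * Q = 0 := by
    ext i j
    have hcol : τ.mulVec (fun k => Q k j) = 0 := by
      funext i'
      have : τ.mulVec (fun k => Q k j) i' = (τ * Q) i' j := by
        simp [Matrix.mulVec, dotProduct, Matrix.mul_apply]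
      rw [this, mul_ker_eq_zero hτ]
      simp
    have := hsupp _ hcol
    have h2 : ρ.mulVec (fun k => Q k j) i = (ρ * Q) i j := by
      simp [Matrix.mulVec, dotProduct, Matrix.mul_apply]
    rw [this] at h2
    simp only [Matrix.zero_apply, Pi.zero_apply] at h2 ⊢
    exact h2.symm
  have hP : mFun (fun x : ℝ => if x = 0 then 0 else 1) τ = 1 - Q := by
    rw [← supp_add_ker hτ, ← hQdef]
    exact (add_sub_cancel_right _ _).symm
  rw [hP, Matrix.mul_sub, Matrix.mul_one, hρQ, sub_zero]

lemma supp_mul_eq_self {ρ τ : Matrix n n ℂ} (hρ : ρ.IsHermitian) (hτ : τ.IsHermitian)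
    (hsupp : suppLE ρ τ) :
    mFun (fun x => if x = 0 then 0 else 1) τ * ρ = ρ := by
  have h := congrArg Matrix.conjTranspose (mul_supp_eq_self hρ hτ hsupp)
  rwa [Matrix.conjTranspose_mul, hρ.eq, (mFun_isHermitian _ hτ).eq] at h

lemma mpow_neg_quarter_mul {τ : Matrix n n ℂ} (hτ : τ.PosSemidef) :
    mpow (-(4:ℝ)⁻¹) τ * mpow ((4:ℝ)⁻¹) τ = mFun (fun x => if x = 0 then 0 else 1) τ := by
  simp only [mpow]
  rw [mFun_mul _ _ hτ.1]
  apply mFun_congr hτ.1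
  intro i
  rcases eq_or_lt_of_le (hτ.eigenvalues_nonneg i) with h | h
  · simp [← h]
  · have hne : hτ.1.eigenvalues i ≠ 0 := ne_of_gt h
    simp only [hne, if_false]
    rw [← Real.rpow_add h]
    norm_num

lemma mpow_quarter_mul_neg {τ : Matrix n n ℂ} (hτ : τ.PosSemidef) :
    mpow ((4:ℝ)⁻¹) τ * mpow (-(4:ℝ)⁻¹) τ = mFun (fun x => if x = 0 then 0 else 1) τ := by
  simp only [mpow]
  rw [mFun_mul _ _ hτ.1]
  apply mFun_congr hτ.1
  intro i
  rcases eq_or_lt_of_le (hτ.eigenvalues_nonneg i) with h | h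
  · simp [← h]
  · have hne : hτ.1.eigenvalues i ≠ 0 := ne_of_gt h
    simp only [hne, if_false]
    rw [← Real.rpow_add h]
    norm_num

lemma mpow_quarter_sq {τ : Matrix n n ℂ} (hτ : τ.PosSemidef) :
    mpow ((4:ℝ)⁻¹) τ * mpow ((4:ℝ)⁻¹) τ = mpow ((2:ℝ)⁻¹) τ := by
  simp only [mpow]
  rw [mFun_mul _ _ hτ.1]
  apply mFun_congr hτ.1
  intro i
  rcases eq_or_lt_of_le (hτ.eigenvalues_nonneg i) with h | h
  · simp [← h]
  · have hne : hτ.1.eigenvalues i ≠ 0 := ne_of_gt h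
    simp only [hne, if_false]
    rw [← Real.rpow_add h]
    norm_num

lemma mpow_half_sq {τ : Matrix n n ℂ} (hτ : τ.PosSemidef) :
    mpow ((2:ℝ)⁻¹) τ * mpow ((2:ℝ)⁻¹) τ = τ := by
  simp only [mpow]
  rw [mFun_mul _ _ hτ.1]
  nth_rewrite 2 [← mFun_id hτ.1]
  apply mFun_congr hτ.1
  intro i
  rcases eq_or_lt_of_le (hτ.eigenvalues_nonneg i) with h | h
  · simp [← h]
  · have hne : hτ.1.eigenvalues i ≠ 0 := ne_of_gt h
    simp only [hne, if_false]
    rw [← Real.rpow_add h]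
    norm_num

lemma re_sq_le_abs_sq (z : ℂ) : z.re ^ 2 ≤ ‖z‖ ^ 2 := by
  rw [Complex.sq_norm, Complex.normSq_apply]
  nlinarith [sq_nonneg z.im]

lemma key_ineq {ρ τ : Matrix n n ℂ} (hρ : ρ.PosSemidef) (hτ : τ.PosSemidef) (hsupp : suppLE ρ τ)
    (Pi : Matrix n n ℂ) (hPiH : Pi.IsHermitian) (hPipsd : Pi.PosSemidef)
    (hPic : (1 - Pi).PosSemidef) :
    ((ρ * Pi).trace.re) ^ 2 ≤ expD2 ρ τ * ((τ * Pi).trace.re) := by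
  set N := mpow (-(4:ℝ)⁻¹) τ with hNdef
  set M := mpow ((4:ℝ)⁻¹) τ with hMdef
  set B := mpow ((2:ℝ)⁻¹) τ with hBdef
  set P := mFun (fun x : ℝ => if x = 0 then 0 else 1) τ with hPdef
  have hNH : N.IsHermitian := mFun_isHermitian _ hτ.1
  have hMH : M.IsHermitian := mFun_isHermitian _ hτ.1
  have hBH : B.IsHermitian := mFun_isHermitian _ hτ.1
  have hNM : N * M = P := mpow_neg_quarter_mul hτ
  have hMN : M * N = P := mpow_quarter_mul_neg hτ
  have hMM : M * M = B := mpow_quarter_sq hτ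
  have hBB : B * B = τ := mpow_half_sq hτ
  have hρP : ρ * P = ρ := mul_supp_eq_self hρ.1 hτ.1 hsupp
  have hPρ : P * ρ = ρ := supp_mul_eq_self hρ.1 hτ.1 hsupp
  set S := N * ρ * N with hSdef
  set T := M * Pi * M with hTdef
  have hSH : S.IsHermitian := by
    rw [hSdef]
    unfold Matrix.IsHermitian
    rw [Matrix.conjTranspose_mul, Matrix.conjTranspose_mul, hNH.eq, hρ.1.eq, Matrix.mul_assoc]
  have hTH : T.IsHermitian := by
    rw [hTdef]
    unfold Matrix.IsHermitian
    rw [Matrix.conjTranspose_mul, Matrix.conjTranspose_mul, hMH.eq, hPiH.eq, Matrix.mul_assoc]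
  have hST : (S * T).trace = (ρ * Pi).trace := by
    have e1 : S * T = N * (ρ * (N * (M * (Pi * M)))) := by
      rw [hSdef, hTdef]; simp only [Matrix.mul_assoc]
    rw [e1, Matrix.trace_mul_comm]
    have e2 : ρ * (N * (M * (Pi * M))) * N = ρ * P * Pi * P := by
      rw [show ρ * P * Pi * P = ρ * ((N*M) * (Pi * (M*N))) by rw [hNM, hMN]; simp only [Matrix.mul_assoc]]
      simp only [Matrix.mul_assoc]
    rw [e2, Matrix.trace_mul_comm, ← Matrix.mul_assoc, ← Matrix.mul_assoc, hPρ, hρP]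
  have hSS : expD2 ρ τ = (S * S).trace.re := by
    rw [expD2, pow_two, hSdef, hNdef]
  have hSSnn : 0 ≤ (S * S).trace.re := by
    have : S * S = Sᴴ * S := by rw [hSH.eq]
    rw [this]
    exact psd_trace_re_nonneg (Matrix.posSemidef_conjTranspose_mul_self S)
  have hC : (B * Pi * B).PosSemidef := by
    have := hPipsd.mul_mul_conjTranspose_same B
    rwa [hBH.eq] at this
  have hTT : (T * T).trace.re ≤ (τ * Pi).trace.re := by
    have e1 : T * T = M * (Pi * (M * (M * (Pi * M)))) := by
      rw [hTdef]; simp only [Matrix.mul_assoc]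
    have e2 : (T * T).trace = ((B * Pi * B) * Pi).trace := by
      rw [e1, Matrix.trace_mul_comm]
      have : Pi * (M * (M * (Pi * M))) * M = Pi * (B * (Pi * B)) := by
        rw [← hMM]; simp only [Matrix.mul_assoc]
      rw [this, Matrix.trace_mul_comm]
      simp only [Matrix.mul_assoc]
    have e3 : ((B * Pi * B) * Pi).trace = (τ * Pi).trace - ((B * Pi * B) * (1 - Pi)).trace := by
      rw [Matrix.mul_sub, Matrix.mul_one, Matrix.trace_sub]
      have h1 : (B * Pi * B).trace = ((Pi * B) * B).trace := by
        rw [Matrix.mul_assoc, Matrix.trace_mul_comm]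
      have h2 : ((Pi * B) * B).trace = (τ * Pi).trace := by
        rw [Matrix.mul_assoc, hBB, Matrix.trace_mul_comm]
      rw [h1, h2]
      ring
    have e4 : 0 ≤ ((B * Pi * B) * (1 - Pi)).trace.re := trace_mul_psd_re_nonneg hC hPic
    rw [e2, e3, Complex.sub_re]
    linarith
  have hcs := trace_cauchy_schwarz S T
  rw [hSH.eq, hST, hTH.eq] at hcs
  calc ((ρ * Pi).trace.re) ^ 2 ≤ ‖(ρ * Pi).trace‖ ^ 2 := re_sq_le_abs_sq _
    _ ≤ (S * S).trace.re * (T * T).trace.re := hcs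
    _ ≤ (S * S).trace.re * (τ * Pi).trace.re := by
        exact mul_le_mul_of_nonneg_left hTT hSSnn
    _ = expD2 ρ τ * ((τ * Pi).trace.re) := by rw [hSS]

lemma smul_add_smul_nonneg {a b : ℂ} (ha : 0 ≤ a) (hb : 0 ≤ b) {s t : ℝ}
    (hs : 0 ≤ s) (ht : 0 ≤ t) : 0 ≤ s • a + t • b := by
  rw [Complex.nonneg_iff] at ha hb ⊢
  constructor
  · simp only [Complex.add_re, Complex.smul_re, smul_eq_mul]
    have := mul_nonneg hs ha.1
    have := mul_nonneg ht hb.1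
    linarith
  · have h1 : a.im = 0 := ha.2.symm
    have h2 : b.im = 0 := hb.2.symm
    simp [Complex.add_im, Complex.smul_im, h1, h2]

/-- exp D₂(ρ‖λρ+(1−λ)σ) ≥ (1−ε)[λ + (1−λ)2^{−D_s^ε(ρ‖σ)}]⁻¹. -/
theorem collision_vs_information_spectrum (ρ σ : Matrix n n ℂ)
    (hρ : IsDensity ρ) (hσ : IsDensity σ)
    (ε lam : ℝ) (hε0 : 0 < ε) (hε1 : ε < 1) (hl0 : 0 < lam) (hl1 : lam < 1) :
    (1 - ε) * (lam + (1 - lam) * (2:ℝ) ^ (-(Ds ε ρ σ)))⁻¹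
      ≤ expD2 ρ (lam • ρ + (1 - lam) • σ) := by
  obtain ⟨hρpsd, hρtr⟩ := hρ
  obtain ⟨hσpsd, hσtr⟩ := hσ
  set τ := lam • ρ + (1 - lam) • σ with hτdef
  have hl1' : (0:ℝ) ≤ 1 - lam := by linarith
  have hτpsd : τ.PosSemidef := by
    refine Matrix.PosSemidef.of_dotProduct_mulVec_nonneg ?_ ?_
    · show τᴴ = τ
      rw [hτdef, Matrix.conjTranspose_add, Matrix.conjTranspose_smul, Matrix.conjTranspose_smul,
        hρpsd.1.eq, hσpsd.1.eq]
      norm_num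
    · intro x
      rw [hτdef]
      simp only [Matrix.add_mulVec, Matrix.smul_mulVec, dotProduct_add,
        dotProduct_smul]
      exact smul_add_smul_nonneg (hρpsd.dotProduct_mulVec_nonneg x) (hσpsd.dotProduct_mulVec_nonneg x) hl0.le hl1'
  have hsupp : suppLE ρ τ := by
    intro v hv
    have h0 : dotProduct (star v) (τ.mulVec v) = 0 := by
      rw [hv, dotProduct_zero]
    have hexp : dotProduct (star v) (τ.mulVec v) =
        lam • (dotProduct (star v) (ρ.mulVec v)) +
        (1 - lam) • (dotProduct (star v) (σ.mulVec v)) := by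
      rw [hτdef]
      simp only [Matrix.add_mulVec, Matrix.smul_mulVec, dotProduct_add,
        dotProduct_smul]
    have hqρ := hρpsd.dotProduct_mulVec_nonneg v
    have hqσ := hσpsd.dotProduct_mulVec_nonneg v
    rw [Complex.nonneg_iff] at hqρ hqσ
    rw [hexp] at h0
    have hre := congrArg Complex.re h0
    have him := congrArg Complex.im h0
    simp only [Complex.add_re, Complex.smul_re, Complex.add_im, Complex.smul_im,
      smul_eq_mul, Complex.zero_re, Complex.zero_im] at hre him
    have haz : dotProduct (star v) (ρ.mulVec v) = 0 := by
      apply Complex.ext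
      · have h1 := hqρ.1
        have h2 := hqσ.1
        have h3 : 0 ≤ (1 - lam) * (dotProduct (star v) (σ.mulVec v)).re :=
          mul_nonneg hl1' h2
        have h4 : 0 ≤ lam * (dotProduct (star v) (ρ.mulVec v)).re :=
          mul_nonneg hl0.le h1
        simp only [Complex.zero_re]
        nlinarith
      · simp [hqρ.2]
    exact (hρpsd.dotProduct_mulVec_zero_iff v).mp haz
  have hτtr : τ.trace.re = 1 := by
    rw [hτdef, Matrix.trace_add, Matrix.trace_smul, Matrix.trace_smul, hρtr, hσtr]
    simp [Complex.add_re, Complex.smul_re]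
  have hE1 : 1 ≤ expD2 ρ τ := by
    have hk := key_ineq hρpsd hτpsd hsupp 1 Matrix.isHermitian_one Matrix.PosSemidef.one
      (by rw [sub_self]; exact Matrix.PosSemidef.zero)
    rw [Matrix.mul_one, Matrix.mul_one, hρtr, hτtr] at hk
    simpa using hk
  set E := expD2 ρ τ with hEdef
  set Sset := {R : ℝ | Complex.re (Matrix.trace (ρ * projNonneg ((2:ℝ)^R • σ - ρ))) ≤ ε}
    with hSset
  -- generic facts about the projections for a given R and c = 2^R (or any c > 0)
  have hproj : ∀ c : ℝ, 0 < c →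
      ∃ Pi : Matrix n n ℂ, Pi.IsHermitian ∧ Pi.PosSemidef ∧ (1 - Pi).PosSemidef ∧
        Pi = 1 - projNonneg (c • σ - ρ) ∧
        c * (σ * Pi).trace.re ≤ (ρ * Pi).trace.re ∧
        (ρ * projNonneg (c • σ - ρ)).trace.re ≤ c * (σ * projNonneg (c • σ - ρ)).trace.re := by
    intro c hcpos
    have hAH : (c • σ - ρ).IsHermitian := by
      show _ᴴ = _
      rw [Matrix.conjTranspose_sub, Matrix.conjTranspose_smul, hσpsd.1.eq, hρpsd.1.eq]
      norm_num
    set A := c • σ - ρ with hA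
    set Pi := mFun (fun x : ℝ => if 0 ≤ x then 0 else 1) A with hPidef
    have hsum : projNonneg A + Pi = 1 := by
      rw [projNonneg, hPidef, mFun_add _ _ hAH]
      have : (fun x : ℝ => (if 0 ≤ x then 1 else 0) + (if 0 ≤ x then 0 else 1)) =
          fun _ => (1:ℝ) := by
        funext x; by_cases h : 0 ≤ x <;> simp [h]
      rw [this, mFun_one hAH]
    have hPiH : Pi.IsHermitian := mFun_isHermitian _ hAH
    have hPipsd : Pi.PosSemidef :=
      mFun_posSemidef (fun x => by by_cases h : 0 ≤ x <;> simp [h]) hAH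
    have hPi'psd : (projNonneg A).PosSemidef := by
      rw [projNonneg]
      exact mFun_posSemidef (fun x => by by_cases h : 0 ≤ x <;> simp [h]) hAH
    have hPieq : Pi = 1 - projNonneg A := by
      rw [← hsum]; exact (add_sub_cancel_left _ _).symm
    have hexpand : ∀ W : Matrix n n ℂ, (A * W).trace.re =
        c * (σ * W).trace.re - (ρ * W).trace.re := by
      intro W
      rw [hA, Matrix.sub_mul, smul_mul_assoc, Matrix.trace_sub, Matrix.trace_smul,
        Complex.sub_re, Complex.smul_re]
      simp [smul_eq_mul]
    refine ⟨Pi, hPiH, hPipsd, by rw [hPieq, sub_sub_cancel]; exact hPi'psd, hPieq, ?_, ?_⟩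
    · have h1 : (A * Pi).trace.re ≤ 0 := by
        rw [hPidef, trace_mul_mFun_re _ hAH]
        apply Finset.sum_nonpos
        intro i _
        by_cases h : 0 ≤ hAH.eigenvalues i
        · simp [h]
        · simp only [h, if_false, mul_one]
          linarith [not_le.mp h]
      have := hexpand Pi
      linarith
    · have h1 : 0 ≤ (A * projNonneg A).trace.re := by
        rw [projNonneg, trace_mul_mFun_re _ hAH]
        apply Finset.sum_nonneg
        intro i _
        by_cases h : 0 ≤ hAH.eigenvalues i
        · simp [h]
        · simp [h]
      have := hexpand (projNonneg A)
      linarith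
  -- every element of Sset gives the bound
  have hmain : ∀ R ∈ Sset, 1 - ε ≤ E * (lam + (1 - lam) * (2:ℝ)^(-R)) := by
    intro R hR
    set c := (2:ℝ)^R with hc
    have hcpos : (0:ℝ) < c := Real.rpow_pos_of_pos (by norm_num) R
    obtain ⟨Pi, hPiH, hPipsd, hPic, hPieq, hmono, -⟩ := hproj c hcpos
    have hρPi' : (ρ * projNonneg (c • σ - ρ)).trace.re ≤ ε := hR
    have ha : 1 - ε ≤ (ρ * Pi).trace.re := by
      rw [hPieq, Matrix.mul_sub, Matrix.mul_one, Matrix.trace_sub, Complex.sub_re, hρtr]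
      simp only [Complex.one_re]
      linarith
    have hσPi0 : 0 ≤ (σ * Pi).trace.re := trace_mul_psd_re_nonneg hσpsd hPipsd
    have hk := key_ineq hρpsd hτpsd hsupp Pi hPiH hPipsd hPic
    have hτPi : (τ * Pi).trace.re =
        lam * (ρ * Pi).trace.re + (1 - lam) * (σ * Pi).trace.re := by
      rw [hτdef, Matrix.add_mul, smul_mul_assoc, smul_mul_assoc, Matrix.trace_add,
        Matrix.trace_smul, Matrix.trace_smul, Complex.add_re, Complex.smul_re, Complex.smul_re]
      simp [smul_eq_mul]
    set a := (ρ * Pi).trace.re with hadef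
    have hapos : (0:ℝ) < a := by linarith
    have hbound : (τ * Pi).trace.re ≤ a * (lam + (1 - lam) * c⁻¹) := by
      have h1 : (σ * Pi).trace.re ≤ c⁻¹ * a := by
        rw [inv_mul_eq_div, le_div_iff₀ hcpos]
        linarith [hmono]
      have h2 : (1 - lam) * (σ * Pi).trace.re ≤ (1 - lam) * (c⁻¹ * a) :=
        mul_le_mul_of_nonneg_left h1 hl1'
      rw [hτPi]
      ring_nf
      nlinarith
    have hkey2 : a ^ 2 ≤ E * (a * (lam + (1 - lam) * c⁻¹)) :=
      le_trans hk (mul_le_mul_of_nonneg_left hbound (by linarith))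
    have hfin : a ≤ E * (lam + (1 - lam) * c⁻¹) := by
      have h' : a * a ≤ (E * (lam + (1 - lam) * c⁻¹)) * a := by nlinarith
      exact le_of_mul_le_mul_right h' hapos
    have hcinv : c⁻¹ = (2:ℝ)^(-R) := by
      rw [hc, ← Real.rpow_neg (by norm_num : (0:ℝ) ≤ 2)]
    rw [hcinv] at hfin
    linarith
  -- Sset is nonempty
  have hSne : Sset.Nonempty := by
    refine ⟨Real.logb 2 ε, ?_⟩
    have hcε : (2:ℝ) ^ (Real.logb 2 ε) = ε :=
      Real.rpow_logb (by norm_num) (by norm_num) hε0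
    show Complex.re (Matrix.trace (ρ * projNonneg ((2:ℝ)^(Real.logb 2 ε) • σ - ρ))) ≤ ε
    rw [hcε]
    obtain ⟨Pi, hPiH, hPipsd, hPic, hPieq, hmono, hmono'⟩ := hproj ε hε0
    have hσ1 : (σ * projNonneg (ε • σ - ρ)).trace.re ≤ 1 := by
      have : σ * projNonneg (ε • σ - ρ) = σ - σ * Pi := by
        rw [hPieq, Matrix.mul_sub, Matrix.mul_one]
        abel
      rw [this, Matrix.trace_sub, Complex.sub_re, hσtr]
      simp only [Complex.one_re]
      have := trace_mul_psd_re_nonneg hσpsd hPipsd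
      linarith
    have hσ0 : 0 ≤ (σ * projNonneg (ε • σ - ρ)).trace.re := by
      apply trace_mul_psd_re_nonneg hσpsd
      rw [hPieq] at hPic
      rwa [sub_sub_cancel] at hPic
    calc (ρ * projNonneg (ε • σ - ρ)).trace.re
        ≤ ε * (σ * projNonneg (ε • σ - ρ)).trace.re := hmono'
      _ ≤ ε * 1 := mul_le_mul_of_nonneg_left hσ1 hε0.le
      _ = ε := mul_one ε
  -- positivity of the denominator
  have hgpos : ∀ x : ℝ, 0 < lam + (1 - lam) * (2:ℝ)^(-x) := by
    intro x
    have : 0 ≤ (1 - lam) * (2:ℝ)^(-x) :=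
      mul_nonneg hl1' (Real.rpow_pos_of_pos (by norm_num) _).le
    linarith
  have hDs : Ds ε ρ σ = sSup Sset := by rw [Ds, hSset]
  rw [← div_eq_mul_inv, div_le_iff₀ (hgpos _), hDs]
  by_cases hbdd : BddAbove Sset
  · have hclos := csSup_mem_closure hSne hbdd
    have hcont : Continuous fun x : ℝ => E * (lam + (1 - lam) * (2:ℝ)^(-x)) := by
      apply continuous_const.mul
      apply continuous_const.add
      apply continuous_const.mul
      have : (fun x : ℝ => (2:ℝ)^(-x)) = fun x => Real.exp (Real.log 2 * (-x)) := by
        funext x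
        rw [Real.rpow_def_of_pos (by norm_num)]
      rw [this]
      exact Real.continuous_exp.comp (continuous_const.mul continuous_neg)
    have hclosed : IsClosed {x : ℝ | 1 - ε ≤ E * (lam + (1 - lam) * (2:ℝ)^(-x))} :=
      isClosed_le continuous_const hcont
    have hsub : closure Sset ⊆ {x : ℝ | 1 - ε ≤ E * (lam + (1 - lam) * (2:ℝ)^(-x))} :=
      hclosed.closure_subset_iff.mpr hmain
    exact hsub hclos
  · rw [Real.sSup_of_not_bddAbove hbdd]
    rw [neg_zero, Real.rpow_zero, mul_one]
    have : lam + (1 - lam) = 1 := by ring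
    rw [this, mul_one]
    linarith
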